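/- Let H₀ be a real symmetric positive definite d×d matrix and H₁ a real symmetric d×d matrix. Then, as ε → 0, (H₀ + ε H₁)^{1/2} = H₀^{1/2} + ε · L_{H₀^{1/2}}^{-1}[H₁] − ε² · L_{H₀^{1/2}}^{-1}[ (L_{H₀^{1/2}}^{-1}[H₁])² ] + o(ε²), where the square roots are the symmetric positive semidefinite matrix square roots. -/

import Mathlib

open Matrix Filter Topology Asymptotics

/-- The positive semidefinite square root of a matrix (zero if the matrix is not
positive semidefinite). -/
noncomputable def psdSqrt {d : ℕ} (M : Matrix (Fin d) (Fin d) ℝ) :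
    Matrix (Fin d) (Fin d) ℝ :=
  open scoped Classical in
  if h : M.PosSemidef then
    h.1.eigenvectorUnitary.1 * diagonal ((↑) ∘ (√·) ∘ h.1.eigenvalues) *
      (star h.1.eigenvectorUnitary : Matrix (Fin d) (Fin d) ℝ)
  else 0

/-- The Sylvester operator `L_M[X] = M X + X M`. -/
def sylv {d : ℕ} (M X : Matrix (Fin d) (Fin d) ℝ) : Matrix (Fin d) (Fin d) ℝ :=
  M * X + X * M

section Aux

variable {d : ℕ}

private def frobSq (A : Matrix (Fin d) (Fin d) ℝ) : ℝ := ∑ i, ∑ j, (A i j)^2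

private lemma frobSq_nonneg (A : Matrix (Fin d) (Fin d) ℝ) : 0 ≤ frobSq A :=
  Finset.sum_nonneg fun _ _ => Finset.sum_nonneg fun _ _ => sq_nonneg _

private lemma sq_entry_le_frobSq (A : Matrix (Fin d) (Fin d) ℝ) (i j : Fin d) :
    (A i j)^2 ≤ frobSq A := by
  have h1 : (A i j)^2 ≤ ∑ j', (A i j')^2 :=
    Finset.single_le_sum (f := fun j' => (A i j')^2) (fun k _ => sq_nonneg _)
      (Finset.mem_univ j)
  exact h1.trans (Finset.single_le_sum (f := fun i' => ∑ j', (A i' j')^2)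
    (fun k _ => Finset.sum_nonneg fun l _ => sq_nonneg _) (Finset.mem_univ i))

private lemma inner_sq_le (A B : Matrix (Fin d) (Fin d) ℝ) :
    (∑ i, ∑ j, A i j * B i j)^2 ≤ frobSq A * frobSq B := by
  have := Finset.sum_mul_sq_le_sq_mul_sq Finset.univ
    (fun p : Fin d × Fin d => A p.1 p.2) (fun p : Fin d × Fin d => B p.1 p.2)
  simpa [Fintype.sum_prod_type, frobSq] using this

private lemma dot_self_nonneg (v : Fin d → ℝ) : 0 ≤ v ⬝ᵥ v :=
  Finset.sum_nonneg fun i _ => mul_self_nonneg _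

private lemma dot_self_pos {v : Fin d → ℝ} (hv : v ≠ 0) : 0 < v ⬝ᵥ v := by
  rcases lt_or_eq_of_le (dot_self_nonneg v) with h | h
  · exact h
  · exact absurd (dotProduct_self_eq_zero.mp h.symm) hv

private lemma quad_expand (M : Matrix (Fin d) (Fin d) ℝ) (v : Fin d → ℝ) :
    v ⬝ᵥ M *ᵥ v = ∑ i, ∑ j, v i * (M i j * v j) := by
  simp [dotProduct, Matrix.mulVec, Finset.mul_sum]

private lemma sq_le_dot (v : Fin d → ℝ) (i : Fin d) : (v i)^2 ≤ v ⬝ᵥ v := by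
  have : (v i) * (v i) ≤ ∑ k, v k * v k :=
    Finset.single_le_sum (f := fun k => v k * v k) (fun k _ => mul_self_nonneg _)
      (Finset.mem_univ i)
  simpa [dotProduct, pow_two] using this

private lemma abs_quad_le (M : Matrix (Fin d) (Fin d) ℝ) (v : Fin d → ℝ) :
    |v ⬝ᵥ M *ᵥ v| ≤ (∑ i, ∑ j, |M i j|) * (v ⬝ᵥ v) := by
  rw [quad_expand]
  calc |∑ i, ∑ j, v i * (M i j * v j)| ≤ ∑ i, ∑ j, |v i * (M i j * v j)| := by
        refine (Finset.abs_sum_le_sum_abs _ _).trans ?_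
        exact Finset.sum_le_sum fun i _ => Finset.abs_sum_le_sum_abs _ _
    _ ≤ ∑ i, ∑ j, |M i j| * (v ⬝ᵥ v) := by
        refine Finset.sum_le_sum fun i _ => Finset.sum_le_sum fun j _ => ?_
        have hvij : |v i| * |v j| ≤ v ⬝ᵥ v := by
          have h1 := sq_le_dot v i
          have h2 := sq_le_dot v j
          nlinarith [sq_abs (v i), sq_abs (v j), sq_nonneg (|v i| - |v j|)]
        have : |v i * (M i j * v j)| = |M i j| * (|v i| * |v j|) := by
          rw [abs_mul, abs_mul]; ring
        rw [this]
        exact mul_le_mul_of_nonneg_left hvij (abs_nonneg _)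
    _ = (∑ i, ∑ j, |M i j|) * (v ⬝ᵥ v) := by rw [Finset.sum_mul]; simp [Finset.sum_mul]

private lemma abs_sum_nonneg (M : Matrix (Fin d) (Fin d) ℝ) :
    0 ≤ ∑ i, ∑ j, |M i j| :=
  Finset.sum_nonneg fun _ _ => Finset.sum_nonneg fun _ _ => abs_nonneg _

private lemma exists_quad_lower (M : Matrix (Fin d) (Fin d) ℝ) (hM : M.PosDef) :
    ∃ c > 0, ∀ v : Fin d → ℝ, c * (v ⬝ᵥ v) ≤ v ⬝ᵥ M *ᵥ v := by
  rcases Nat.eq_zero_or_pos d with hd | hd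
  · refine ⟨1, one_pos, fun v => ?_⟩
    subst hd
    simp [dotProduct, Matrix.mulVec]
  set f : EuclideanSpace ℝ (Fin d) → ℝ :=
    fun v => ∑ i, ∑ j, (EuclideanSpace.proj i) v * (M i j * (EuclideanSpace.proj j) v)
    with hf
  have hfc : Continuous f := by
    refine continuous_finset_sum _ fun i _ => continuous_finset_sum _ fun j _ => ?_
    exact ((EuclideanSpace.proj i).continuous).mul
      (continuous_const.mul (EuclideanSpace.proj j).continuous)
  have hfeq : ∀ v : EuclideanSpace ℝ (Fin d),
      f v = (fun k => v k) ⬝ᵥ M *ᵥ (fun k => v k) := by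
    intro v; rw [quad_expand]; rfl
  haveI : Nontrivial (EuclideanSpace ℝ (Fin d)) := by
    refine ⟨0, EuclideanSpace.single ⟨0, hd⟩ 1, ?_⟩
    intro h
    have := congrArg (fun x : EuclideanSpace ℝ (Fin d) => x ⟨0, hd⟩) h.symm
    simp [EuclideanSpace.single_apply] at this
  have hne : (Metric.sphere (0 : EuclideanSpace ℝ (Fin d)) 1).Nonempty :=
    NormedSpace.sphere_nonempty.mpr zero_le_one
  obtain ⟨x0, hx0mem, hx0min'⟩ :=
    (isCompact_sphere (0 : EuclideanSpace ℝ (Fin d)) 1).exists_isMinOn hne hfc.continuousOn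
  have hx0min : ∀ y ∈ Metric.sphere (0 : EuclideanSpace ℝ (Fin d)) 1, f x0 ≤ f y :=
    fun y hy => hx0min' hy
  have hx0norm : ‖x0‖ = 1 := by simpa using hx0mem
  have hx0ne : (fun k => x0 k) ≠ (0 : Fin d → ℝ) := by
    intro h
    have : x0 = 0 := by ext k; exact congrFun h k
    rw [this] at hx0norm; simp at hx0norm
  set c := f x0 with hc
  have hcpos : 0 < c := by rw [hc, hfeq]; simpa using hM.dotProduct_mulVec_pos (x := fun k => x0 k) hx0ne
  refine ⟨c, hcpos, fun v => ?_⟩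
  rcases eq_or_ne v 0 with rfl | hv
  · simp [dotProduct]
  have hvv : 0 < v ⬝ᵥ v := dot_self_pos hv
  set t := Real.sqrt (v ⬝ᵥ v) with ht
  have htpos : 0 < t := Real.sqrt_pos.mpr hvv
  set u : EuclideanSpace ℝ (Fin d) := WithLp.toLp 2 (fun k => t⁻¹ * v k) with hu
  have hudot : (fun k => u k) ⬝ᵥ (fun k => u k) = 1 := by
    have h1 : (fun k => u k) ⬝ᵥ (fun k => u k) = t⁻¹ * t⁻¹ * (v ⬝ᵥ v) := by
      simp only [hu, PiLp.toLp_apply, dotProduct, Finset.mul_sum]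
      exact Finset.sum_congr rfl fun k _ => by ring
    have htt : t * t = v ⬝ᵥ v := Real.mul_self_sqrt (le_of_lt hvv)
    have htne : t ≠ 0 := ne_of_gt htpos
    rw [h1, ← htt]
    field_simp
  have humem : u ∈ Metric.sphere (0 : EuclideanSpace ℝ (Fin d)) 1 := by
    simp only [Metric.mem_sphere, dist_zero_right]
    rw [EuclideanSpace.norm_eq]
    have : ∑ i, ‖u i‖^2 = 1 := by
      simpa [Real.norm_eq_abs, sq_abs, dotProduct, pow_two] using hudot
    rw [this, Real.sqrt_one]
  have hmin := hx0min u humem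
  have hfu : f u = t⁻¹ * t⁻¹ * (v ⬝ᵥ M *ᵥ v) := by
    rw [hfeq, quad_expand, quad_expand]
    simp only [hu, PiLp.toLp_apply, Finset.mul_sum]
    refine Finset.sum_congr rfl fun i _ => Finset.sum_congr rfl fun j _ => ?_
    show (t⁻¹ * v i) * (M i j * (t⁻¹ * v j)) = t⁻¹ * t⁻¹ * (v i * (M i j * v j))
    ring
  have ht2 : t * t = v ⬝ᵥ v := Real.mul_self_sqrt (le_of_lt hvv)
  have hfin : c ≤ t⁻¹ * t⁻¹ * (v ⬝ᵥ M *ᵥ v) := by rw [← hfu]; exact hmin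
  have htne : t ≠ 0 := ne_of_gt htpos
  calc c * (v ⬝ᵥ v) = c * (t * t) := by rw [ht2]
    _ ≤ (t⁻¹ * t⁻¹ * (v ⬝ᵥ M *ᵥ v)) * (t * t) := by
        exact mul_le_mul_of_nonneg_right hfin (by positivity)
    _ = v ⬝ᵥ M *ᵥ v := by field_simp

private lemma sum_mul_left (S Y : Matrix (Fin d) (Fin d) ℝ) :
    ∑ i, ∑ j, Y i j * (S * Y) i j
      = ∑ j, (fun k => Y k j) ⬝ᵥ S *ᵥ (fun k => Y k j) := by
  simp only [Matrix.mul_apply, dotProduct, Matrix.mulVec, Finset.mul_sum]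
  rw [Finset.sum_comm]

private lemma sum_mul_right (S Y : Matrix (Fin d) (Fin d) ℝ) :
    ∑ i, ∑ j, Y i j * (Y * S) i j
      = ∑ i, (fun k => Y i k) ⬝ᵥ S *ᵥ (fun k => Y i k) := by
  refine Finset.sum_congr rfl fun i _ => ?_
  simp only [Matrix.mul_apply, dotProduct, Matrix.mulVec, Finset.mul_sum]
  rw [Finset.sum_comm]
  refine Finset.sum_congr rfl fun j _ => Finset.sum_congr rfl fun k _ => by ring

private lemma frobSq_eq_rows (Y : Matrix (Fin d) (Fin d) ℝ) :
    ∑ i, (fun k => Y i k) ⬝ᵥ (fun k => Y i k) = frobSq Y := by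
  simp [frobSq, dotProduct, pow_two]

private lemma key_ineq (S R : Matrix (Fin d) (Fin d) ℝ) (hS : S.PosSemidef) (c : ℝ)
    (hR : ∀ v : Fin d → ℝ, c * (v ⬝ᵥ v) ≤ v ⬝ᵥ R *ᵥ v) :
    c * frobSq (S - R) ≤ ∑ i, ∑ j, (S - R) i j * (S * S - R * R) i j := by
  set D := S - R with hD
  have hid : S * S - R * R = S * D + D * R := by rw [hD]; noncomm_ring
  rw [hid]
  have hsplit : ∑ i, ∑ j, D i j * (S * D + D * R) i j
      = (∑ i, ∑ j, D i j * (S * D) i j) + ∑ i, ∑ j, D i j * (D * R) i j := by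
    simp [Matrix.add_apply, mul_add, Finset.sum_add_distrib]
  rw [hsplit, sum_mul_left, sum_mul_right]
  have h1 : 0 ≤ ∑ j, (fun k => D k j) ⬝ᵥ S *ᵥ (fun k => D k j) :=
    Finset.sum_nonneg fun j _ => by simpa using hS.dotProduct_mulVec_nonneg (fun k => D k j)
  have h2 : c * frobSq D ≤ ∑ i, (fun k => D i k) ⬝ᵥ R *ᵥ (fun k => D i k) := by
    rw [← frobSq_eq_rows, Finset.mul_sum]
    exact Finset.sum_le_sum fun i _ => hR _
  linarith

private lemma psdSqrt_posSemidef (M : Matrix (Fin d) (Fin d) ℝ) :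
    (psdSqrt M).PosSemidef := by
  rw [psdSqrt]
  split
  · rename_i h
    exact (Matrix.PosSemidef.diagonal (fun i => by
      simp [Real.sqrt_nonneg])).mul_mul_conjTranspose_same _
  · exact Matrix.PosSemidef.zero

private lemma psdSqrt_mul_self {M : Matrix (Fin d) (Fin d) ℝ} (h : M.PosSemidef) :
    psdSqrt M * psdSqrt M = M := by
  rw [psdSqrt, dif_pos h]
  have hU : (star h.1.eigenvectorUnitary.1) * h.1.eigenvectorUnitary.1 = 1 :=
    h.1.eigenvectorUnitary.2.1
  conv_rhs => rw [h.1.spectral_theorem]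
  rw [Unitary.conjStarAlgAut_apply]
  simp only [Matrix.mul_assoc]
  rw [← Matrix.mul_assoc (star h.1.eigenvectorUnitary.1) h.1.eigenvectorUnitary.1, hU,
    Matrix.one_mul, ← Matrix.mul_assoc (diagonal _) (diagonal _), diagonal_mul_diagonal]
  congr 3
  funext k
  simp [Real.mul_self_sqrt (h.eigenvalues_nonneg k)]

private lemma psdSqrt_symm (M : Matrix (Fin d) (Fin d) ℝ) : (psdSqrt M)ᵀ = psdSqrt M := by
  have h := (psdSqrt_posSemidef M).1
  rw [Matrix.IsHermitian, Matrix.conjTranspose_eq_transpose_of_trivial] at h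
  exact h

private lemma psdSqrt_posDef {M : Matrix (Fin d) (Fin d) ℝ} (hM : M.PosDef) :
    (psdSqrt M).PosDef := by
  set Q := psdSqrt M with hQ
  have hQpsd := psdSqrt_posSemidef M
  have hQ2 : Q * Q = M := psdSqrt_mul_self hM.posSemidef
  set C := psdSqrt Q with hC
  have hC2 : C * C = Q := psdSqrt_mul_self hQpsd
  have hCsym : Cᵀ = C := psdSqrt_symm Q
  refine Matrix.PosDef.of_dotProduct_mulVec_pos hQpsd.1 fun v hv => ?_
  have hkey : v ⬝ᵥ Q *ᵥ v = (C *ᵥ v) ⬝ᵥ (C *ᵥ v) := by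
    rw [← hC2, ← Matrix.mulVec_mulVec, Matrix.dotProduct_mulVec, ← Matrix.mulVec_transpose,
      hCsym]
  rcases eq_or_ne (C *ᵥ v) 0 with h0 | h0
  · exfalso
    have hQv : Q *ᵥ v = 0 := by
      rw [← hC2, ← Matrix.mulVec_mulVec, h0, Matrix.mulVec_zero]
    have hMv : M *ᵥ v = 0 := by
      rw [← hQ2, ← Matrix.mulVec_mulVec, hQv, Matrix.mulVec_zero]
    have := hM.dotProduct_mulVec_pos hv
    rw [hMv] at this
    simp at this
  · have hpos : 0 < (C *ᵥ v) ⬝ᵥ (C *ᵥ v) := dot_self_pos h0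
    show (0:ℝ) < star v ⬝ᵥ Q *ᵥ v
    rw [star_trivial, hkey]
    exact hpos

private lemma aux_sub_sq (x y e : ℝ) (he : e^2 ≤ 1) :
    (x - e*y)^2 ≤ 2*x^2 + 2*y^2 := by
  nlinarith [sq_nonneg (x + e*y), sq_nonneg y]

private lemma aux_pd {A B t c0 b0 e : ℝ} (h1 : c0 * t ≤ A) (h2 : |B| ≤ b0 * t)
    (h3 : |e| * (b0 + 1) < c0) (ht : 0 < t) : 0 < A + e * B := by
  have h4 : -(|e| * |B|) ≤ e * B := by
    have := neg_abs_le (e * B)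
    rwa [abs_mul] at this
  have h5 : |e| * |B| ≤ |e| * (b0 * t) := mul_le_mul_of_nonneg_left h2 (abs_nonneg e)
  have h6 : |e| * (b0 + 1) * t < c0 * t := mul_lt_mul_of_pos_right h3 ht
  have h7 : 0 ≤ |e| * t := mul_nonneg (abs_nonneg e) ht.le
  nlinarith

private lemma aux_rlow {A B1 B2 t c b1 b2 e : ℝ} (h7 : c * t ≤ A)
    (h3 : |e * B1| ≤ |e| * (b1 * t)) (h4 : |e^2 * B2| ≤ |e| * (b2 * t))
    (h8 : |e| * (2 * (b1 + b2 + 1)) * t ≤ c * t) (h9 : 0 ≤ |e| * t) :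
    (c / 2) * t ≤ A + e * B1 - e^2 * B2 := by
  have h3' := (abs_le.mp h3).1
  have h4' := (abs_le.mp h4).2
  nlinarith

private lemma aux_cancel {a w u : ℝ} (ha : 0 < a) (h : w * a * a ≤ u * a) :
    w * a ≤ u :=
  le_of_mul_le_mul_right h ha

private lemma aux_final {c a u : ℝ} (hc : 0 < c) (h : (c^2/4) * a ≤ u) :
    a ≤ u * (4 / c^2) := by
  have h4 : (0:ℝ) < 4 / c^2 := by positivity
  have h5 := mul_le_mul_of_nonneg_right h h4.le
  have h6 : (c^2/4) * a * (4/c^2) = a := by field_simp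
  linarith [h6 ▸ h5]

end Aux

theorem sqrt_second_order_expansion {d : ℕ}
    (H0 H1 : Matrix (Fin d) (Fin d) ℝ) (hH0 : H0.PosDef) (hH1 : H1.IsSymm)
    (X1 X2 : Matrix (Fin d) (Fin d) ℝ)
    (hX1 : sylv (psdSqrt H0) X1 = H1)
    (hX2 : sylv (psdSqrt H0) X2 = X1 * X1) :
    ∀ i j, (fun ε : ℝ =>
        (psdSqrt (H0 + ε • H1) - (psdSqrt H0 + ε • X1 - (ε ^ 2) • X2)) i j)
      =o[𝓝 (0 : ℝ)] fun ε => ε ^ 2 := by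
  intro i j
  have hQpd : (psdSqrt H0).PosDef := psdSqrt_posDef hH0
  have hQ2 : psdSqrt H0 * psdSqrt H0 = H0 := psdSqrt_mul_self hH0.posSemidef
  set Q := psdSqrt H0 with hQdef
  have hX1e : Q * X1 + X1 * Q = H1 := hX1
  have hX2e : Q * X2 + X2 * Q = X1 * X1 := hX2
  have hH1herm : H1.IsHermitian := by
    rw [Matrix.IsHermitian, Matrix.conjTranspose_eq_transpose_of_trivial]
    exact hH1
  obtain ⟨c, hc, hlow⟩ := exists_quad_lower Q hQpd
  obtain ⟨c0, hc0, hlow0⟩ := exists_quad_lower H0 hH0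
  set b0 := ∑ i', ∑ j', |H1 i' j'| with hb0
  set b1 := ∑ i', ∑ j', |X1 i' j'| with hb1
  set b2 := ∑ i', ∑ j', |X2 i' j'| with hb2
  have hb0n : 0 ≤ b0 := abs_sum_nonneg H1
  have hb1n : 0 ≤ b1 := abs_sum_nonneg X1
  have hb2n : 0 ≤ b2 := abs_sum_nonneg X2
  set δ : ℝ := min 1 (min (c0 / (b0 + 1)) (c / (2 * (b1 + b2 + 1)))) with hδdef
  have hδpos : 0 < δ := by
    refine lt_min one_pos (lt_min (div_pos hc0 (by linarith)) (div_pos hc (by linarith)))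
  set M0 : ℝ := 2 * frobSq (X1 * X2 + X2 * X1) + 2 * frobSq (X2 * X2) with hM0
  have hM0n : 0 ≤ M0 := by
    have := frobSq_nonneg (X1 * X2 + X2 * X1)
    have := frobSq_nonneg (X2 * X2)
    positivity
  set C : ℝ := Real.sqrt (4 * M0 / c ^ 2) with hC
  have hbound : ∀ ε : ℝ, |ε| < δ →
      |(psdSqrt (H0 + ε • H1) - (Q + ε • X1 - (ε ^ 2) • X2)) i j| ≤ C * |ε| ^ 3 := by
    intro ε hε
    have hε1 : |ε| ≤ 1 := le_of_lt (lt_of_lt_of_le hε (min_le_left _ _))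
    have hεc0 : |ε| < c0 / (b0 + 1) :=
      lt_of_lt_of_le hε ((min_le_right _ _).trans (min_le_left _ _))
    have hεc : |ε| < c / (2 * (b1 + b2 + 1)) :=
      lt_of_lt_of_le hε ((min_le_right _ _).trans (min_le_right _ _))
    have hεc0' : |ε| * (b0 + 1) < c0 :=
      (lt_div_iff₀ (show (0:ℝ) < b0 + 1 by linarith)).mp hεc0
    have hεc' : |ε| * (2 * (b1 + b2 + 1)) < c :=
      (lt_div_iff₀ (show (0:ℝ) < 2 * (b1 + b2 + 1) by linarith)).mp hεc
    set S := psdSqrt (H0 + ε • H1) with hS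
    set R := Q + ε • X1 - (ε ^ 2) • X2 with hR
    -- positive definiteness of the perturbed matrix
    have hpd : (H0 + ε • H1).PosDef := by
      refine Matrix.PosDef.of_dotProduct_mulVec_pos ?_ ?_
      · show (H0 + ε • H1)ᴴ = H0 + ε • H1
        rw [Matrix.conjTranspose_add, Matrix.conjTranspose_smul, hH0.1.eq, hH1herm.eq,
          star_trivial]
      · intro v hv
        show (0:ℝ) < star v ⬝ᵥ (H0 + ε • H1) *ᵥ v
        rw [star_trivial]
        have hexp : v ⬝ᵥ (H0 + ε • H1) *ᵥ v = v ⬝ᵥ H0 *ᵥ v + ε * (v ⬝ᵥ H1 *ᵥ v) := by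
          rw [Matrix.add_mulVec, dotProduct_add, Matrix.smul_mulVec,
            dotProduct_smul, smul_eq_mul]
        rw [hexp]
        have hvv : 0 < v ⬝ᵥ v := dot_self_pos hv
        exact aux_pd (hlow0 v) (abs_quad_le H1 v) hεc0' hvv
    have hSpsd := psdSqrt_posSemidef (H0 + ε • H1)
    have hS2 : S * S = H0 + ε • H1 := psdSqrt_mul_self hpd.posSemidef
    -- lower bound for R
    have hRlow : ∀ v : Fin d → ℝ, (c / 2) * (v ⬝ᵥ v) ≤ v ⬝ᵥ R *ᵥ v := by
      intro v
      have hexp : v ⬝ᵥ R *ᵥ v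
          = v ⬝ᵥ Q *ᵥ v + ε * (v ⬝ᵥ X1 *ᵥ v) - ε ^ 2 * (v ⬝ᵥ X2 *ᵥ v) := by
        rw [hR, Matrix.sub_mulVec, Matrix.add_mulVec, dotProduct_sub, dotProduct_add,
          Matrix.smul_mulVec, Matrix.smul_mulVec, dotProduct_smul,
          dotProduct_smul, smul_eq_mul, smul_eq_mul]
      rw [hexp]
      have hvv := dot_self_nonneg v
      have habs1 := abs_quad_le X1 v
      have habs2 := abs_quad_le X2 v
      have h3 : |ε * (v ⬝ᵥ X1 *ᵥ v)| ≤ |ε| * (b1 * (v ⬝ᵥ v)) := by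
        rw [abs_mul]; exact mul_le_mul_of_nonneg_left habs1 (abs_nonneg _)
      have h4 : |ε ^ 2 * (v ⬝ᵥ X2 *ᵥ v)| ≤ |ε| * (b2 * (v ⬝ᵥ v)) := by
        rw [abs_mul, abs_pow]
        have : |ε| ^ 2 ≤ |ε| := by
          rw [pow_two]
          simpa using mul_le_mul_of_nonneg_left hε1 (abs_nonneg ε)
        calc |ε| ^ 2 * |v ⬝ᵥ X2 *ᵥ v| ≤ |ε| * |v ⬝ᵥ X2 *ᵥ v| :=
              mul_le_mul_of_nonneg_right this (abs_nonneg _)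
          _ ≤ |ε| * (b2 * (v ⬝ᵥ v)) := mul_le_mul_of_nonneg_left habs2 (abs_nonneg _)
      have h5 := neg_abs_le (ε * (v ⬝ᵥ X1 *ᵥ v))
      have h6 := le_abs_self (ε ^ 2 * (v ⬝ᵥ X2 *ᵥ v))
      have h7 := hlow v
      have h8 : |ε| * (2 * (b1 + b2 + 1)) * (v ⬝ᵥ v) ≤ c * (v ⬝ᵥ v) :=
        mul_le_mul_of_nonneg_right (le_of_lt hεc') hvv
      have h9 : 0 ≤ |ε| * (v ⬝ᵥ v) := mul_nonneg (abs_nonneg ε) hvv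
      exact aux_rlow h7 h3 h4 h8 h9
    -- the key inequality
    have hkey := key_ineq S R hSpsd (c / 2) hRlow
    -- compute S*S - R*R
    have hRR : S * S - R * R = (ε ^ 3) • ((X1 * X2 + X2 * X1) - ε • (X2 * X2)) := by
      have hexp : R * R = Q * Q + ε • (Q * X1 + X1 * Q)
          + (ε ^ 2) • (X1 * X1 - (Q * X2 + X2 * Q))
          - (ε ^ 3) • ((X1 * X2 + X2 * X1) - ε • (X2 * X2)) := by
        rw [hR]
        simp only [add_mul, mul_add, sub_mul, mul_sub, smul_mul_assoc, mul_smul_comm,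
          smul_smul, smul_add, smul_sub]
        module
      rw [hS2, hexp, hQ2, hX1e, hX2e]
      simp only [sub_self, smul_zero, add_zero]
      abel
    set E := (X1 * X2 + X2 * X1) - ε • (X2 * X2) with hE
    have hsum : ∑ i', ∑ j', (S - R) i' j' * (S * S - R * R) i' j'
        = ε ^ 3 * ∑ i', ∑ j', (S - R) i' j' * E i' j' := by
      rw [hRR]
      simp only [Matrix.smul_apply, smul_eq_mul, Finset.mul_sum]
      exact Finset.sum_congr rfl fun i' _ => Finset.sum_congr rfl fun j' _ => by ring
    set a := frobSq (S - R) with ha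
    set P := ∑ i', ∑ j', (S - R) i' j' * E i' j' with hP
    have hCS : P ^ 2 ≤ a * frobSq E := inner_sq_le _ _
    have hEb : frobSq E ≤ M0 := by
      rw [hM0]
      have hstep : ∀ i' j', (E i' j')^2
          ≤ 2 * ((X1 * X2 + X2 * X1) i' j')^2 + 2 * ((X2 * X2) i' j')^2 := by
        intro i' j'
        have hEij : E i' j' = (X1 * X2 + X2 * X1) i' j' - ε * (X2 * X2) i' j' := by
          rw [hE]; simp [Matrix.sub_apply, Matrix.smul_apply, smul_eq_mul]
        rw [hEij]
        have hsq : ε ^ 2 ≤ 1 := by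
          rw [← sq_abs]
          exact pow_le_one₀ (abs_nonneg ε) hε1
        exact aux_sub_sq _ _ _ hsq
      calc frobSq E ≤ ∑ i', ∑ j', (2 * ((X1 * X2 + X2 * X1) i' j')^2
            + 2 * ((X2 * X2) i' j')^2) :=
            Finset.sum_le_sum fun i' _ => Finset.sum_le_sum fun j' _ => hstep i' j'
        _ = 2 * frobSq (X1 * X2 + X2 * X1) + 2 * frobSq (X2 * X2) := by
            simp [frobSq, Finset.sum_add_distrib, Finset.mul_sum]
    have han : 0 ≤ a := frobSq_nonneg _
    have hFn : 0 ≤ frobSq E := frobSq_nonneg _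
    -- derive a ≤ ε^6 * (4*M0/c^2)
    have haM : a ≤ ε ^ 6 * (4 * M0 / c ^ 2) := by
      have hkey2 : (c / 2) * a ≤ ε ^ 3 * P := by rw [← hsum]; exact hkey
      rcases eq_or_lt_of_le han with h0 | hapos
      · rw [← h0]
        have h6 : (0:ℝ) ≤ ε ^ 6 := by positivity
        have h7 : (0:ℝ) ≤ 4 * M0 / c ^ 2 := by positivity
        exact mul_nonneg h6 h7
      · have hnn : 0 ≤ (c / 2) * a := by positivity
        have hsq1 : ((c / 2) * a) ^ 2 ≤ (ε ^ 3 * P) ^ 2 :=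
          pow_le_pow_left₀ hnn hkey2 2
        have hsq2 : (ε ^ 3 * P) ^ 2 ≤ ε ^ 6 * (a * M0) := by
          have hP2 : P ^ 2 ≤ a * M0 :=
            hCS.trans (mul_le_mul_of_nonneg_left hEb han)
          have h66 : (ε ^ 3) ^ 2 = ε ^ 6 := by ring
          calc (ε ^ 3 * P) ^ 2 = (ε ^ 3) ^ 2 * P ^ 2 := by ring
            _ ≤ (ε ^ 3) ^ 2 * (a * M0) :=
                mul_le_mul_of_nonneg_left hP2 (sq_nonneg _)
            _ = ε ^ 6 * (a * M0) := by rw [h66]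
        have hchain : (c ^ 2 / 4) * a * a ≤ ε ^ 6 * M0 * a := by
          have e1 : ((c / 2) * a) ^ 2 = (c ^ 2 / 4) * a * a := by ring
          have e2 : ε ^ 6 * (a * M0) = ε ^ 6 * M0 * a := by ring
          rw [e1] at hsq1
          rw [e2] at hsq2
          exact hsq1.trans hsq2
        have hdiv : (c ^ 2 / 4) * a ≤ ε ^ 6 * M0 := aux_cancel hapos hchain
        have := aux_final hc hdiv
        calc a ≤ ε ^ 6 * M0 * (4 / c ^ 2) := this
          _ = ε ^ 6 * (4 * M0 / c ^ 2) := by ring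
    have hentry : ((S - R) i j) ^ 2 ≤ a := sq_entry_le_frobSq _ i j
    have hCsq : (C * |ε| ^ 3) ^ 2 = ε ^ 6 * (4 * M0 / c ^ 2) := by
      rw [mul_pow, hC, Real.sq_sqrt (by positivity : (0:ℝ) ≤ 4 * M0 / c ^ 2)]
      have : (|ε| ^ 3) ^ 2 = ε ^ 6 := by
        rw [← pow_mul, ← abs_pow, abs_of_nonneg (by positivity : (0:ℝ) ≤ ε ^ 6)]
      rw [this]; ring
    have hfin : ((S - R) i j) ^ 2 ≤ (C * |ε| ^ 3) ^ 2 := by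
      rw [hCsq]; exact hentry.trans haM
    calc |(S - R) i j| = Real.sqrt (((S - R) i j) ^ 2) := (Real.sqrt_sq_eq_abs _).symm
      _ ≤ Real.sqrt ((C * |ε| ^ 3) ^ 2) := Real.sqrt_le_sqrt hfin
      _ = C * |ε| ^ 3 := Real.sqrt_sq (by positivity)
  -- assemble the asymptotics
  have hO : (fun ε : ℝ =>
      (psdSqrt (H0 + ε • H1) - (Q + ε • X1 - (ε ^ 2) • X2)) i j)
      =O[𝓝 (0 : ℝ)] fun ε => ε ^ 3 := by
    rw [Asymptotics.isBigO_iff]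
    refine ⟨C, ?_⟩
    rw [Metric.eventually_nhds_iff]
    refine ⟨δ, hδpos, fun ε hε => ?_⟩
    have hε' : |ε| < δ := by rwa [Real.dist_eq, sub_zero] at hε
    have := hbound ε hε'
    simpa [Real.norm_eq_abs, abs_pow] using this
  have hoo : (fun ε : ℝ => ε ^ 3) =o[𝓝 (0 : ℝ)] fun ε => ε ^ 2 := by
    have h1 : (fun ε : ℝ => ε) =o[𝓝 (0 : ℝ)] (fun _ => (1 : ℝ)) :=
      (isLittleO_one_iff ℝ).mpr tendsto_id
    have h2 := h1.mul_isBigO (isBigO_refl (fun ε : ℝ => ε ^ 2) (𝓝 (0 : ℝ)))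
    have heq : (fun ε : ℝ => ε * ε ^ 2) = fun ε : ℝ => ε ^ 3 := by
      funext ε; ring
    have heq2 : (fun ε : ℝ => (1 : ℝ) * ε ^ 2) = fun ε : ℝ => ε ^ 2 := by
      funext ε; ring
    rwa [heq, heq2] at h2
  exact hO.trans_isLittleO hoo
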